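/- Let 𝒜 ⊆ M_n(ℝ) be a unital subalgebra containing all diagonal matrices, let A ∈ 𝒜 be a covering matrix for 𝒜 (i.e. for every (i,j), a_{ij} ≠ 0 whenever some matrix of 𝒜 has a nonzero (i,j) entry), and let D = diag(d_1,…,d_n) with d_i ≠ d_j for i ≠ j. Then the unital subalgebra generated by A and D equals 𝒜. -/

import Mathlib

set_option maxHeartbeats 1000000


open Matrix

theorem diag_mem_adjoin (n : ℕ) (A : Matrix (Fin n) (Fin n) ℝ)
    (d : Fin n → ℝ) (hd : Function.Injective d) (f : Fin n → ℝ) :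
    Matrix.diagonal f ∈ Algebra.adjoin ℝ {A, Matrix.diagonal d} := by
  set p := Lagrange.interpolate Finset.univ d f with hp
  have key : Polynomial.aeval (Matrix.diagonal d) p = Matrix.diagonal f := by
    have h1 : Polynomial.aeval (Matrix.diagonalAlgHom ℝ d) p
        = Matrix.diagonalAlgHom ℝ (Polynomial.aeval d p) :=
      Polynomial.aeval_algHom_apply _ d p
    simp only [Matrix.diagonalAlgHom_apply] at h1
    rw [h1, Matrix.diagonal_eq_diagonal_iff]
    intro i
    rw [Polynomial.aeval_fn_apply, Polynomial.coe_aeval_eq_eval]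
    exact Lagrange.eval_interpolate_at_node f (Set.injOn_of_injective hd)
      (Finset.mem_univ i)
  have h0 : Polynomial.aeval (Matrix.diagonal d) p ∈
      Algebra.adjoin ℝ {Matrix.diagonal d} := by
    rw [Algebra.adjoin_singleton_eq_range_aeval]
    exact ⟨p, rfl⟩
  rw [← key]
  have hsub : ({Matrix.diagonal d} : Set (Matrix (Fin n) (Fin n) ℝ)) ⊆
      {A, Matrix.diagonal d} := by
    intro x hx
    rw [Set.mem_singleton_iff] at hx
    subst hx
    exact Set.mem_insert_of_mem _ rfl
  exact Algebra.adjoin_mono hsub h0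

/-- If a unital subalgebra `𝒜 ⊆ Mₙ(ℝ)` contains all diagonal matrices, `A ∈ 𝒜` is a
covering matrix for `𝒜`, and `D` is a diagonal matrix with pairwise distinct diagonal
entries, then `𝒜` is generated by `A` and `D`. -/
theorem stmt3 (n : ℕ) (𝒜 : Subalgebra ℝ (Matrix (Fin n) (Fin n) ℝ))
    (hdiag : ∀ d : Fin n → ℝ, Matrix.diagonal d ∈ 𝒜)
    (A : Matrix (Fin n) (Fin n) ℝ) (hA : A ∈ 𝒜)
    (hcover : ∀ i j : Fin n, (∃ X ∈ 𝒜, X i j ≠ 0) → A i j ≠ 0)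
    (d : Fin n → ℝ) (hd : Function.Injective d) :
    Algebra.adjoin ℝ {A, Matrix.diagonal d} = 𝒜 := by
  apply le_antisymm
  · apply Algebra.adjoin_le
    rintro x (rfl | rfl)
    · exact hA
    · exact hdiag d
  · intro X hX
    have hdiag' := diag_mem_adjoin n A d hd
    have hAmem : A ∈ Algebra.adjoin ℝ {A, Matrix.diagonal d} :=
      Algebra.subset_adjoin (by simp)
    rw [matrix_eq_sum_single X]
    apply Subalgebra.sum_mem
    intro i _
    apply Subalgebra.sum_mem
    intro j _
    by_cases h : X i j = 0
    · rw [h, Matrix.single_zero]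
      exact Subalgebra.zero_mem _
    · have hAij : A i j ≠ 0 := hcover i j ⟨X, hX, h⟩
      have key : Matrix.diagonal (Pi.single i 1) * A * Matrix.diagonal (Pi.single j 1)
          = Matrix.single i j (A i j) := by
        ext a b
        simp only [Matrix.mul_diagonal, Matrix.diagonal_mul, Matrix.single, of_apply]
        rcases eq_or_ne i a with rfl | ha
        · rcases eq_or_ne j b with rfl | hb
          · simp
          · simp [Pi.single_eq_of_ne (Ne.symm hb), hb]
        · simp [Pi.single_eq_of_ne (Ne.symm ha), ha]
      have mem1 : Matrix.single i j (A i j) ∈ Algebra.adjoin ℝ {A, Matrix.diagonal d} := by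
        rw [← key]
        exact Subalgebra.mul_mem _ (Subalgebra.mul_mem _ (hdiag' _) hAmem) (hdiag' _)
      have : Matrix.single i j (X i j) = (X i j / A i j) • Matrix.single i j (A i j) := by
        rw [smul_single, smul_eq_mul, div_mul_cancel₀ _ hAij]
      rw [this]
      exact Subalgebra.smul_mem _ mem1 _
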